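/- Let 1 ≤ i ≤ j ≤ e with either (j = e−1 and 1 ≤ i ≤ e−1) or (j = e and 2 ≤ i ≤ e−1). Then every short exact sequence of Λ_e-modules 0 → U_{[i,j]} → E → U_{[i,j]} → 0 splits; equivalently, Ext¹ of U_{[i,j]} with itself, computed in the category of Λ_e-modules, vanishes. -/

import Mathlib

/-! Common framework: representations of the quiver Q_e / modules over the
generalized Brauer star algebra Λ_e, encoded as a module `V` together with
endomorphisms `v i` (images of the vertex idempotents), `a i` (images of the
arrows; `a i` is the arrow leaving vertex `i`, with `a ⟨e-1⟩` the arrow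
`α_e : e → 1`) and `d` (image of the loop `δ`). -/

namespace GBTA

structure PreRep (R : Type) [CommRing R] (e : ℕ) : Type 1 where
  V : Type
  [instAdd : AddCommGroup V]
  [instMod : Module R V]
  v : Fin e → Module.End R V
  a : Fin e → Module.End R V
  d : Module.End R V

attribute [instance] PreRep.instAdd PreRep.instMod

variable {R : Type} [CommRing R] {e : ℕ}

/-- The (0-based) index of the vertex `e`. -/
def ve (e : ℕ) [NeZero e] : Fin e :=
  ⟨e - 1, by have := Nat.pos_of_ne_zero (NeZero.ne e); omega⟩

/-- The (0-based) index of the vertex `e - 1`. -/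
def vem (e : ℕ) [NeZero e] : Fin e :=
  ⟨e - 2, by have := Nat.pos_of_ne_zero (NeZero.ne e); omega⟩

/-- The cycle `C_i`: the composite of the `e` cyclically consecutive arrows
starting with the arrow leaving vertex `i` (composites written right to left). -/
def cyc [NeZero e] (ρ : PreRep R e) (i : Fin e) : Module.End R ρ.V :=
  (((List.range e).reverse).map fun l => ρ.a (i + @Nat.cast (Fin e) (Fin.NatCast.instNatCast e) l)).prod

/-- The defining relations of the generalized Brauer star algebra `Λ_e`. -/
def Satisfies [NeZero e] (ρ : PreRep R e) : Prop :=
  (∀ i j : Fin e, i ≠ j → ρ.v i * ρ.v j = 0) ∧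
  (∀ i : Fin e, ρ.v i * ρ.v i = ρ.v i) ∧
  ((∑ i : Fin e, ρ.v i) = 1) ∧
  (∀ i : Fin e, ρ.a i = ρ.v (i + 1) * ρ.a i * ρ.v i) ∧
  (ρ.d = ρ.v (ve e) * ρ.d * ρ.v (ve e)) ∧
  (ρ.d * ρ.a (vem e) = 0) ∧
  (ρ.a (ve e) * ρ.d = 0) ∧
  (ρ.d * ρ.d = cyc ρ (ve e) * cyc ρ (ve e)) ∧
  (∀ i : Fin e, i ≠ ve e → ρ.a i * (cyc ρ i * cyc ρ i) = 0)

/-- The space of `Λ_e`-module homomorphisms `ρ → σ`: linear maps commuting with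
all the structure maps. -/
def homSet (ρ σ : PreRep R e) : Submodule R (ρ.V →ₗ[R] σ.V) where
  carrier := {f | (∀ i, f ∘ₗ ρ.v i = σ.v i ∘ₗ f) ∧ (∀ i, f ∘ₗ ρ.a i = σ.a i ∘ₗ f) ∧
    f ∘ₗ ρ.d = σ.d ∘ₗ f}
  add_mem' := by
    rintro f g ⟨hfv, hfa, hfd⟩ ⟨hgv, hga, hgd⟩
    exact ⟨fun i => by simp only [LinearMap.add_comp, LinearMap.comp_add, hfv i, hgv i],
      fun i => by simp only [LinearMap.add_comp, LinearMap.comp_add, hfa i, hga i],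
      by simp only [LinearMap.add_comp, LinearMap.comp_add, hfd, hgd]⟩
  zero_mem' := ⟨fun i => by simp, fun i => by simp, by simp⟩
  smul_mem' := by
    rintro c f ⟨hfv, hfa, hfd⟩
    exact ⟨fun i => by simp only [LinearMap.smul_comp, LinearMap.comp_smul, hfv i],
      fun i => by simp only [LinearMap.smul_comp, LinearMap.comp_smul, hfa i],
      by simp only [LinearMap.smul_comp, LinearMap.comp_smul, hfd]⟩

/-- Projectivity of a `Λ_e`-module, via the lifting property in the category of
`Λ_e`-modules. -/
def IsProjective [NeZero e] (P : PreRep R e) : Prop :=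
  Satisfies P ∧
  ∀ (A B : PreRep R e), Satisfies A → Satisfies B →
    ∀ p ∈ homSet A B, Function.Surjective p →
      ∀ g ∈ homSet P B, ∃ h ∈ homSet P A, p ∘ₗ h = g

/-- An endomorphism `f` of `ρ` factors through a projective `Λ_e`-module. -/
def FactorsThroughProjective [NeZero e] (ρ : PreRep R e) (f : ρ.V →ₗ[R] ρ.V) : Prop :=
  ∃ P : PreRep R e, IsProjective P ∧ ∃ g ∈ homSet ρ P, ∃ h ∈ homSet P ρ, f = h ∘ₗ g

/-- "The stable endomorphism ring of `ρ` is isomorphic to the scalars": the identity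
does not factor through a projective, and modulo endomorphisms factoring through
projectives every endomorphism is a scalar multiple of the identity. -/
def StableEndIsoScalars [NeZero e] (ρ : PreRep R e) : Prop :=
  (¬ FactorsThroughProjective ρ LinearMap.id) ∧
  ∀ f ∈ homSet ρ ρ, ∃ c : R, FactorsThroughProjective ρ (f - c • LinearMap.id)

/-- The linear map on `Fin m → W` sending the `src` coordinate to the `dst`
coordinate through `g`, and killing all other coordinates. -/
def mk1 {m : ℕ} {W : Type} [AddCommGroup W] [Module R W] (src dst : Fin m)
    (g : W →ₗ[R] W) : (Fin m → W) →ₗ[R] (Fin m → W) where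
  toFun x := fun r => if r = dst then g (x src) else 0
  map_add' x y := by funext r; by_cases h : r = dst <;> simp [h]
  map_smul' c x := by funext r; by_cases h : r = dst <;> simp [h]

/-- Projection onto the coordinates satisfying `S`. -/
def prj {m : ℕ} {W : Type} [AddCommGroup W] [Module R W] (S : Fin m → Prop)
    [DecidablePred S] : (Fin m → W) →ₗ[R] (Fin m → W) where
  toFun x := fun r => if S r then x r else 0
  map_add' x y := by funext r; by_cases h : S r <;> simp [h]
  map_smul' c x := by funext r; by_cases h : S r <;> simp [h]

/-- Last row index (`e`, 0-based) among `e+1` rows. -/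
def lastRow (e : ℕ) : Fin (e + 1) := ⟨e, Nat.lt_succ_self e⟩

/-- Second-to-last row index (`e-1`, 0-based) among `e+1` rows. -/
def sndRow (e : ℕ) : Fin (e + 1) := ⟨e - 1, by omega⟩

/-- The vertex carrying each of the `e+1` rows: row `r < e-1` sits at vertex `r`,
rows `e-1` and `e` sit at the vertex `e` (0-based index `e-1`). -/
def vrt (e : ℕ) [NeZero e] : Fin (e + 1) → Fin e := fun r =>
  if h : r.val < e - 1 then ⟨r.val, by omega⟩ else ve e


/-- The `n × n` Jordan block with eigenvalue `lam`. -/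
def jordan (R : Type) [CommRing R] (n : ℕ) (lam : R) : Matrix (Fin n) (Fin n) R :=
  Matrix.of fun i j => if i = j then lam else if (j : ℕ) = (i : ℕ) + 1 then 1 else 0

/-- The band module `B(n, lam)`. Rows `0, …, e-2` are the components `k^n` at the
vertices `1, …, e-1`; rows `e-1` and `e` are the two copies of `k^n` at vertex `e`. -/
@[reducible] def band (R : Type) [CommRing R] (e : ℕ) [NeZero e] (n : ℕ) (lam : R) : PreRep R e where
  V := Fin (e + 1) → Fin n → R
  v i := prj fun r => vrt e r = i
  a j :=
    if j.val = e - 1 then mk1 (sndRow e) ⟨0, by omega⟩ LinearMap.id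
    else if j.val = e - 2 then mk1 ⟨e - 2, by omega⟩ (lastRow e) LinearMap.id
    else mk1 ⟨j.val, Nat.lt_succ_of_lt j.isLt⟩ ⟨j.val + 1, Nat.succ_lt_succ j.isLt⟩ LinearMap.id
  d := mk1 (sndRow e) (lastRow e) (Matrix.mulVecLin (jordan R n lam))

/-- The band module `B(1, s)` (with `δ` acting through the scalar `s`); the standard
basis vector `c_i` (`1 ≤ i ≤ e-1`) is the `i-1`-st coordinate, `c_e` the `e-1`-st and
`c_{e+1}` the `e`-th. -/
@[reducible] def band1 (R : Type) [CommRing R] (e : ℕ) [NeZero e] (s : R) : PreRep R e where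
  V := Fin (e + 1) → R
  v i := prj fun r => vrt e r = i
  a j :=
    if j.val = e - 1 then mk1 (sndRow e) ⟨0, by omega⟩ LinearMap.id
    else if j.val = e - 2 then mk1 ⟨e - 2, by omega⟩ (lastRow e) LinearMap.id
    else mk1 ⟨j.val, Nat.lt_succ_of_lt j.isLt⟩ ⟨j.val + 1, Nat.succ_lt_succ j.isLt⟩ LinearMap.id
  d := mk1 (sndRow e) (lastRow e) (s • LinearMap.id)

/-- The projective module `P_e`, with basis `b_{i,1}, b_{i,2}` (row `i-1`) for
`1 ≤ i ≤ e-1` and `b_{e,1}, b_{e,2}` (row `e-1`), `b_{e,3}, b_{e,4}` (row `e`). -/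
@[reducible] def Pe (R : Type) [CommRing R] (e : ℕ) [NeZero e] : PreRep R e where
  V := Fin (e + 1) → Fin 2 → R
  v i := prj fun r => vrt e r = i
  a j :=
    if j.val = e - 1 then mk1 (sndRow e) ⟨0, by omega⟩ LinearMap.id
    else if j.val = e - 2 then
      mk1 ⟨e - 2, by omega⟩ (sndRow e) (Matrix.mulVecLin !![0, 0; 1, 0])
        + mk1 ⟨e - 2, by omega⟩ (lastRow e) (Matrix.mulVecLin !![0, 0; 0, 1])
    else mk1 ⟨j.val, Nat.lt_succ_of_lt j.isLt⟩ ⟨j.val + 1, Nat.succ_lt_succ j.isLt⟩ LinearMap.id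
  d := mk1 (sndRow e) (lastRow e) (Matrix.mulVecLin !![1, 0; 0, 0])
    + mk1 (lastRow e) (lastRow e) (Matrix.mulVecLin !![0, 0; 1, 0])

/-- `Mdef R e τ`: the representation with basis `m_1, …, m_{e+1}` (rows `0, …, e`),
`α_j(m_j) = m_{j+1}` for `j ≤ e-2`, `α_{e-1}(m_{e-1}) = τ · m_{e+1}`,
`α_e(m_e) = m_1`, `δ(m_e) = m_{e+1}`.  For `τ = 0` this is the string module `W`. -/
@[reducible] def Mdef (R : Type) [CommRing R] (e : ℕ) [NeZero e] (t : R) : PreRep R e where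
  V := Fin (e + 1) → R
  v i := prj fun r => vrt e r = i
  a j :=
    if j.val = e - 1 then mk1 (sndRow e) ⟨0, by omega⟩ LinearMap.id
    else if j.val = e - 2 then mk1 ⟨e - 2, by omega⟩ (lastRow e) (t • LinearMap.id)
    else mk1 ⟨j.val, Nat.lt_succ_of_lt j.isLt⟩ ⟨j.val + 1, Nat.succ_lt_succ j.isLt⟩ LinearMap.id
  d := mk1 (sndRow e) (lastRow e) LinearMap.id

/-- The uniserial module `U_{[i,j]}` (with `1 ≤ i ≤ j ≤ e`, 1-based). -/
@[reducible] def U (R : Type) [CommRing R] (e i j : ℕ) : PreRep R e where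
  V := Fin (j + 1 - i) → R
  v t := prj fun r => i - 1 + r.val = t.val
  a t :=
    if h : i ≤ t.val + 1 ∧ t.val + 1 ≤ j - 1 then
      mk1 ⟨t.val + 1 - i, by omega⟩ ⟨t.val + 2 - i, by omega⟩ LinearMap.id
    else 0
  d := 0

/-- The uniserial projective module `P_i` (`i0` is the 0-based index of the vertex),
with basis `p_0, …, p_{2e}` following the cycle of arrows twice around. -/
@[reducible] def Puni (R : Type) [CommRing R] (e : ℕ) [NeZero e] (i0 : ℕ) : PreRep R e where
  V := Fin (2 * e + 1) → R
  v t := prj fun r => (i0 + r.val) % e = t.val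
  a t := ∑ l : Fin (2 * e),
    if (i0 + l.val) % e = t.val then mk1 l.castSucc l.succ LinearMap.id else 0
  d := 0

/-- The simple module `S_e` at the vertex `e`. -/
@[reducible] def Se (R : Type) [CommRing R] (e : ℕ) [NeZero e] : PreRep R e where
  V := R
  v i := if i = ve e then 1 else 0
  a _ := 0
  d := 0

/-- Block upper triangular endomorphism `(x, y) ↦ (f x + θ y, f y)` of `V × V`. -/
def blk {V : Type} [AddCommGroup V] [Module R V] (f th : Module.End R V) :
    Module.End R (V × V) where
  toFun p := (f p.1 + th p.2, f p.2)
  map_add' p q := by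
    simp only [Prod.fst_add, Prod.snd_add, map_add, Prod.mk_add_mk, Prod.mk.injEq, and_true]
    abel
  map_smul' c p := by
    simp only [Prod.smul_fst, Prod.smul_snd, map_smul, Prod.smul_mk, Prod.mk.injEq,
      smul_add, RingHom.id_apply, and_self]

section Ext
variable [NeZero e]

/-- The data of a self-extension of `ρ`: for each generator of `Λ_e`, the
off-diagonal block of its action on `ρ.V × ρ.V`. -/
abbrev Cochain (ρ : PreRep R e) : Type :=
  (Fin e → Module.End R ρ.V) × (Fin e → Module.End R ρ.V) × Module.End R ρ.V

/-- The self-extension of `ρ` determined by the cochain `θ`. -/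
@[reducible] def extRep (ρ : PreRep R e) (th : Cochain ρ) : PreRep R e where
  V := ρ.V × ρ.V
  v i := blk (ρ.v i) (th.1 i)
  a i := blk (ρ.a i) (th.2.1 i)
  d := blk ρ.d th.2.2

/-- `θ` is a cocycle precisely when the corresponding extension is a `Λ_e`-module. -/
def IsCocycle (ρ : PreRep R e) (th : Cochain ρ) : Prop := Satisfies (extRep ρ th)

/-- The coboundary of `φ`; extensions differing by a coboundary are equivalent. -/
def bnd (ρ : PreRep R e) (phi : Module.End R ρ.V) : Cochain ρ :=
  (fun i => ρ.v i * phi - phi * ρ.v i, fun i => ρ.a i * phi - phi * ρ.a i,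
    ρ.d * phi - phi * ρ.d)

/-- `Ext¹_{Λ_e}(ρ, ρ)`, i.e. the space of self-extensions of `ρ` modulo equivalence
(equivalently cocycles modulo coboundaries), is one-dimensional. -/
def ExtSelfOneDimensional (ρ : PreRep R e) : Prop :=
  ∃ th0 : Cochain ρ, IsCocycle ρ th0 ∧ (∀ phi, th0 ≠ bnd ρ phi) ∧
    ∀ th : Cochain ρ, IsCocycle ρ th → ∃ (c : R) (phi : Module.End R ρ.V),
      th = c • th0 + bnd ρ phi

end Ext


/-- The endomorphism algebra of a representation. -/
def endAlg (ρ : PreRep R e) : Subalgebra R (Module.End R ρ.V) where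
  carrier := {f | (∀ i, f * ρ.v i = ρ.v i * f) ∧ (∀ i, f * ρ.a i = ρ.a i * f) ∧
    f * ρ.d = ρ.d * f}
  mul_mem' := by
    rintro f g ⟨hfv, hfa, hfd⟩ ⟨hgv, hga, hgd⟩
    refine ⟨fun i => ?_, fun i => ?_, ?_⟩
    · rw [mul_assoc, hgv i, ← mul_assoc, hfv i, mul_assoc]
    · rw [mul_assoc, hga i, ← mul_assoc, hfa i, mul_assoc]
    · rw [mul_assoc, hgd, ← mul_assoc, hfd, mul_assoc]
  one_mem' := ⟨fun i => by rw [one_mul, mul_one], fun i => by rw [one_mul, mul_one],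
    by rw [one_mul, mul_one]⟩
  add_mem' := by
    rintro f g ⟨hfv, hfa, hfd⟩ ⟨hgv, hga, hgd⟩
    exact ⟨fun i => by rw [add_mul, mul_add, hfv i, hgv i],
      fun i => by rw [add_mul, mul_add, hfa i, hga i],
      by rw [add_mul, mul_add, hfd, hgd]⟩
  zero_mem' := ⟨fun i => by rw [zero_mul, mul_zero], fun i => by rw [zero_mul, mul_zero],
    by rw [zero_mul, mul_zero]⟩
  algebraMap_mem' c :=
    ⟨fun i => Algebra.commutes c (ρ.v i), fun i => Algebra.commutes c (ρ.a i),
      Algebra.commutes c ρ.d⟩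

/-- The endomorphism `τ` of `B(1,λ)` (and of `W`): `c_e ↦ c_{e+1}`, all other
standard basis vectors to `0`. -/
def tau (R : Type) [CommRing R] (e : ℕ) : (Fin (e + 1) → R) →ₗ[R] (Fin (e + 1) → R) :=
  mk1 (sndRow e) (lastRow e) LinearMap.id

/-- The map `r₁ : B(1,λ) → P_e` (with parameter `μ` the coefficient on `b_{e,3}`):
`c_i ↦ b_{i,2}` for `1 ≤ i ≤ e-1`, `c_e ↦ b_{e,2} + μ b_{e,3}`, `c_{e+1} ↦ b_{e,4}`. -/
def r1 (R : Type) [CommRing R] (e : ℕ) (mu : R) :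
    (Fin (e + 1) → R) →ₗ[R] (Fin (e + 1) → Fin 2 → R) where
  toFun x := fun r c => if c = 1 then x r else if r = lastRow e then mu * x (sndRow e) else 0
  map_add' x y := by
    funext r c
    by_cases h : c = 1
    · simp [h]
    · by_cases h2 : r = lastRow e <;> simp [h, h2, mul_add]
  map_smul' t x := by
    funext r c
    by_cases h : c = 1
    · simp [h]
    · by_cases h2 : r = lastRow e <;> simp [h, h2] <;> ring

/-- The map `r₂ : B(1,λ) → P_e`: `c_e ↦ b_{e,4}`, all other basis vectors to `0`. -/
def r2 (R : Type) [CommRing R] (e : ℕ) :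
    (Fin (e + 1) → R) →ₗ[R] (Fin (e + 1) → Fin 2 → R) where
  toFun x := fun r c => if r = lastRow e ∧ c = 1 then x (sndRow e) else 0
  map_add' x y := by
    funext r c
    by_cases h : r = lastRow e ∧ c = 1 <;> simp [h]
  map_smul' t x := by
    funext r c
    by_cases h : r = lastRow e ∧ c = 1 <;> simp [h]

/-- The map `s₁ : P_e → B(1,λ)`: `b_{e,1} ↦ c_e`, `b_{e,2} ↦ c_{e+1}`,
`b_{e,3} ↦ λ c_{e+1}`, `b_{i,1} ↦ c_i`; zero on `b_{e,4}` and the `b_{i,2}`. -/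
def s1 (R : Type) [CommRing R] (e : ℕ) (lam : R) :
    (Fin (e + 1) → Fin 2 → R) →ₗ[R] (Fin (e + 1) → R) where
  toFun y := fun r =>
    if r = lastRow e then y (sndRow e) 1 + lam * y (lastRow e) 0 else y r 0
  map_add' x y := by
    funext r
    by_cases h : r = lastRow e <;> simp [h, mul_add] <;> ring
  map_smul' t x := by
    funext r
    by_cases h : r = lastRow e <;> simp [h] <;> ring

/-- The map `s₂ : P_e → B(1,λ)`: `b_{e,1} ↦ c_{e+1}`, all other basis vectors to `0`. -/
def s2 (R : Type) [CommRing R] (e : ℕ) :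
    (Fin (e + 1) → Fin 2 → R) →ₗ[R] (Fin (e + 1) → R) where
  toFun y := fun r => if r = lastRow e then y (sndRow e) 0 else 0
  map_add' x y := by funext r; by_cases h : r = lastRow e <;> simp [h]
  map_smul' t x := by funext r; by_cases h : r = lastRow e <;> simp [h]

/-- The map `g : W → P_e`, `w_e ↦ b_{e,3}`, `w_{e+1} ↦ b_{e,4}`, `w_j ↦ 0`. -/
def gW (R : Type) [CommRing R] (e : ℕ) :
    (Fin (e + 1) → R) →ₗ[R] (Fin (e + 1) → Fin 2 → R) where
  toFun x := fun r c =>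
    if r = lastRow e then (if c = 0 then x (sndRow e) else x (lastRow e)) else 0
  map_add' x y := by
    funext r c
    by_cases h : r = lastRow e <;> by_cases h2 : c = 0 <;> simp [h, h2]
  map_smul' t x := by
    funext r c
    by_cases h : r = lastRow e <;> by_cases h2 : c = 0 <;> simp [h, h2]

/-- The map `h : P_e → W`, `b_{e,1} ↦ w_e`, `b_{j,1} ↦ w_j`, `b_{e,3} ↦ w_{e+1}`,
zero on `b_{e,2}`, `b_{e,4}` and the `b_{j,2}`. -/
def hW (R : Type) [CommRing R] (e : ℕ) :
    (Fin (e + 1) → Fin 2 → R) →ₗ[R] (Fin (e + 1) → R) where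
  toFun y := fun r => y r 0
  map_add' x y := rfl
  map_smul' t x := rfl



/-! #### Auxiliary material for Statement 13 -/

/-- Residue of a natural number in `Fin e`. -/
def idx (e : ℕ) [NeZero e] (m : ℕ) : Fin e :=
  ⟨m % e, Nat.mod_lt _ (Nat.pos_of_ne_zero (NeZero.ne e))⟩

lemma idx_val (e : ℕ) [NeZero e] (m : ℕ) : (idx e m).val = m % e := rfl

lemma idx_succ (e : ℕ) [NeZero e] (m : ℕ) : idx e m + 1 = idx e (m + 1) := by
  apply Fin.ext
  rw [Fin.add_def]
  show (m % e + (1 : Fin e).val) % e = (m + 1) % e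
  rw [Fin.val_one', ← Nat.add_mod]

/-- The sequence of images of the generator of a uniserial module under the
consecutive arrows, inside an arbitrary module `E`. -/
def wseq {R : Type} [CommRing R] {e : ℕ} [NeZero e] (E : PreRep R e) (i : ℕ)
    (x0 : E.V) : ℕ → E.V :=
  fun r => Nat.rec (E.v (idx e (i - 1)) x0) (fun r w => E.a (idx e (i - 1 + r)) w) r

lemma prj_single {R : Type} [CommRing R] {m : ℕ} (S : Fin m → Prop) [DecidablePred S]
    (r : Fin m) (c : R) :
    prj (R := R) S (Pi.single r c) = if S r then Pi.single r c else 0 := by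
  funext r'
  by_cases h : r' = r
  · subst h
    by_cases hS : S r' <;> simp [prj, hS]
  · by_cases hS : S r <;> by_cases hS' : S r' <;>
      simp [prj, hS, hS', Pi.single_apply, h]

lemma mk1_single {R : Type} [CommRing R] {m : ℕ} {W : Type} [AddCommGroup W]
    [Module R W] (src dst : Fin m) (gl : W →ₗ[R] W) (r : Fin m) (c : W) :
    mk1 (R := R) src dst gl (Pi.single r c) =
      if src = r then Pi.single dst (gl c) else 0 := by
  funext r'
  by_cases h : r' = dst
  · subst h
    by_cases h2 : src = r <;> simp [mk1, Pi.single_apply, h2]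
  · by_cases h2 : src = r <;> simp [mk1, Pi.single_apply, h, h2]

lemma single_eq_single {R : Type} [CommRing R] {m : ℕ} (a b : Fin m)
    (h : a.val = b.val) (c : R) :
    (Pi.single a c : Fin m → R) = Pi.single b c := by
  cases Fin.ext h; rfl

lemma pi_ext {R : Type} [CommRing R] {m : ℕ} {M : Type} [AddCommGroup M] [Module R M]
    (F G : (Fin m → R) →ₗ[R] M)
    (h : ∀ r : Fin m, F (Pi.single r 1) = G (Pi.single r 1)) : F = G := by
  apply Module.Basis.ext (Pi.basisFun R (Fin m))
  intro r
  simpa [Pi.basisFun_apply] using h r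

/-- For `j = e-1, 1 ≤ i ≤ e-1` or `j = e, 2 ≤ i ≤ e-1`,
every short exact sequence of `Λ_e`-modules
`0 → U_{[i,j]} → E → U_{[i,j]} → 0` splits. -/
theorem uniserial_ext_vanishes (k : Type) [Field k] (e : ℕ) (he : 2 ≤ e) [NeZero e]
    (i j : ℕ)
    (hcase : (1 ≤ i ∧ i ≤ e - 1 ∧ j = e - 1) ∨ (2 ≤ i ∧ i ≤ e - 1 ∧ j = e)) :
    ∀ E : PreRep k e, Satisfies E →
      ∀ f ∈ homSet (U k e i j) E, ∀ g ∈ homSet E (U k e i j),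
        Function.Injective f → Function.Surjective g →
          LinearMap.range f = LinearMap.ker g →
            ∃ s ∈ homSet (U k e i j) E, g ∘ₗ s = LinearMap.id := by
  intro E hE f hf g hg hinj hsurj hex
  obtain ⟨hfv, hfa, hfd⟩ := hf
  obtain ⟨hgv, hga, hgd⟩ := hg
  obtain ⟨horth, hidem, -, hvav, hvdv, hda, -, -, -⟩ := hE
  have epos : 0 < e := Nat.pos_of_ne_zero (NeZero.ne e)
  have hi1 : 1 ≤ i := by rcases hcase with ⟨h, -, -⟩ | ⟨h, -, -⟩ <;> omega
  have hie : i ≤ e - 1 := by rcases hcase with ⟨-, h, -⟩ | ⟨-, h, -⟩ <;> omega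
  have hj : j = e - 1 ∨ j = e := by
    rcases hcase with ⟨-, -, h⟩ | ⟨-, -, h⟩ <;> omega
  have hi2 : j = e → 2 ≤ i := by
    rcases hcase with ⟨-, -, h⟩ | ⟨h, -, -⟩ <;> omega
  have hij : i ≤ j := by omega
  have hje : j ≤ e := by omega
  have hn1 : 1 ≤ j + 1 - i := by omega
  obtain ⟨x0, hx0⟩ := hsurj (Pi.single (⟨0, by omega⟩ : Fin (j + 1 - i)) (1 : k))
  set w : ℕ → E.V := wseq E i x0 with hwdef
  have hw0 : w 0 = E.v (idx e (i - 1)) x0 := rfl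
  have hwsucc : ∀ r : ℕ, w (r + 1) = E.a (idx e (i - 1 + r)) (w r) := fun _ => rfl
  -- each w r lies in its vertex component
  have hW1 : ∀ r : ℕ, E.v (idx e (i - 1 + r)) (w r) = w r := by
    intro r
    induction r with
    | zero =>
      have h := DFunLike.congr_fun (hidem (idx e (i - 1))) x0
      simpa [Module.End.mul_apply, hw0] using h
    | succ r ih =>
      have h1 : E.a (idx e (i - 1 + r)) (w r) =
          E.v (idx e (i - 1 + r) + 1) (E.a (idx e (i - 1 + r))
            (E.v (idx e (i - 1 + r)) (w r))) := by
        simpa [Module.End.mul_apply] using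
          DFunLike.congr_fun (hvav (idx e (i - 1 + r))) (w r)
      rw [ih] at h1
      have h3 : idx e (i - 1 + (r + 1)) = idx e (i - 1 + r) + 1 := by
        rw [show i - 1 + (r + 1) = (i - 1 + r) + 1 by omega, ← idx_succ]
      rw [h3, hwsucc r]
      exact h1.symm
  have hW2 : ∀ (t : Fin e) (r : ℕ), t ≠ idx e (i - 1 + r) → E.v t (w r) = 0 := by
    intro t r hne
    conv_lhs => rw [← hW1 r]
    simpa [Module.End.mul_apply] using
      DFunLike.congr_fun (horth t _ hne) (w r)
  -- images under g
  have hW3 : ∀ r : ℕ, r < j + 1 - i → ∀ rf : Fin (j + 1 - i), rf.val = r →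
      g (w r) = Pi.single rf 1 := by
    intro r
    induction r with
    | zero =>
      intro h0 rf hrf
      have h := DFunLike.congr_fun (hgv (idx e (i - 1))) x0
      simp only [LinearMap.comp_apply] at h
      rw [hx0] at h
      rw [hw0, h]
      dsimp only [U]
      rw [prj_single, if_pos (by
        show i - 1 + (0 : ℕ) = (idx e (i - 1)).val
        rw [idx_val, Nat.mod_eq_of_lt (by omega)]; omega)]
      exact single_eq_single _ _ (by rw [hrf]) 1
    | succ r ih =>
      intro hr rf hrf
      have hr' : r < j + 1 - i := by omega
      have h := DFunLike.congr_fun (hga (idx e (i - 1 + r))) (w r)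
      simp only [LinearMap.comp_apply] at h
      rw [ih hr' ⟨r, hr'⟩ rfl] at h
      rw [hwsucc r, h]
      have htv : (idx e (i - 1 + r)).val = i - 1 + r := by
        rw [idx_val, Nat.mod_eq_of_lt (by omega)]
      dsimp only [U]
      split
      · rw [mk1_single, if_pos (by
          apply Fin.ext
          show (idx e (i - 1 + r)).val + 1 - i = r
          rw [htv]; omega)]
        simp only [LinearMap.id_apply]
        refine single_eq_single _ _ ?_ _
        show (idx e (i - 1 + r)).val + 2 - i = rf.val
        rw [htv, hrf]; omega
      · next hcond =>
        exfalso; apply hcond; rw [htv]; omega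
  -- the exit obstruction vanishes
  have hW4 : w (j + 1 - i) = 0 := by
    have hrec : w (j + 1 - i) = E.a (idx e (i - 1 + (j - i))) (w (j - i)) := by
      rw [show j + 1 - i = (j - i) + 1 by omega, hwsucc]
    have hgw : g (w (j + 1 - i)) = 0 := by
      rw [hrec]
      have h := DFunLike.congr_fun (hga (idx e (i - 1 + (j - i)))) (w (j - i))
      simp only [LinearMap.comp_apply] at h
      rw [h]
      have htv : (idx e (i - 1 + (j - i))).val = j - 1 := by
        rw [idx_val, Nat.mod_eq_of_lt (by omega)]; omega
      dsimp only [U]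
      split
      · next hcond => exfalso; rw [htv] at hcond; omega
      · simp
    obtain ⟨z, hz⟩ : w (j + 1 - i) ∈ LinearMap.range f := by
      rw [hex]; exact LinearMap.mem_ker.mpr hgw
    have hT := hW1 (j + 1 - i)
    have hfz : f ((U k e i j).v (idx e (i - 1 + (j + 1 - i))) z) = f z := by
      have h := DFunLike.congr_fun (hfv (idx e (i - 1 + (j + 1 - i)))) z
      simp only [LinearMap.comp_apply] at h
      rw [h, hz, hT]
    have hz0 : (U k e i j).v (idx e (i - 1 + (j + 1 - i))) z = z := hinj hfz
    have hzz : (U k e i j).v (idx e (i - 1 + (j + 1 - i))) z = 0 := by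
      dsimp only [U]
      funext r'
      show (if i - 1 + r'.val = (idx e (i - 1 + (j + 1 - i))).val then z r' else 0) = 0
      rw [if_neg]
      have hr' := r'.isLt
      have hTv : (idx e (i - 1 + (j + 1 - i))).val = j % e := by
        rw [idx_val]; congr 1; omega
      rw [hTv]
      rcases hj with h | h
      · have hm : j % e = j := Nat.mod_eq_of_lt (by omega)
        omega
      · have hm : j % e = 0 := by rw [h]; exact Nat.mod_self e
        have := hi2 h
        omega
    rw [← hz, hz0.symm.trans hzz, map_zero]
  -- δ kills everything
  have hW5 : ∀ r : ℕ, r < j + 1 - i → E.d (w r) = 0 := by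
    intro r hr
    by_cases hce : i - 1 + r = e - 1
    · have hje' : j = e := by rcases hj with h | h <;> omega
      have hr1 : 1 ≤ r := by omega
      have hrec : w r = E.a (idx e (i - 1 + (r - 1))) (w (r - 1)) := by
        conv_lhs => rw [show r = (r - 1) + 1 by omega]
        exact hwsucc (r - 1)
      have hidxv : idx e (i - 1 + (r - 1)) = vem e := by
        apply Fin.ext
        rw [idx_val, Nat.mod_eq_of_lt (by omega)]
        show _ = e - 2
        omega
      rw [hrec, hidxv]
      simpa [Module.End.mul_apply] using DFunLike.congr_fun hda (w (r - 1))
    · have hne : ve e ≠ idx e (i - 1 + r) := by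
        intro hEq
        apply hce
        have h := congrArg Fin.val hEq
        rw [idx_val, Nat.mod_eq_of_lt (by omega)] at h
        rw [← h]; rfl
      have h := DFunLike.congr_fun hvdv (w r)
      simp only [Module.End.mul_apply] at h
      rw [h, hW2 _ r hne, map_zero, map_zero]
  -- the splitting
  set s : (Fin (j + 1 - i) → k) →ₗ[k] E.V :=
    ∑ r : Fin (j + 1 - i), (LinearMap.proj r).smulRight (w r.val) with hs
  have s_single : ∀ rf : Fin (j + 1 - i), s (Pi.single rf 1) = w rf.val := by
    intro rf
    rw [hs]
    simp only [LinearMap.sum_apply, LinearMap.smulRight_apply, LinearMap.proj_apply,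
      Pi.single_apply, ite_smul, one_smul, zero_smul]
    simp [Finset.sum_ite_eq]
  refine ⟨s, ⟨?_, ?_, ?_⟩, ?_⟩
  · -- compatibility with the idempotents
    intro t
    apply pi_ext
    intro r
    simp only [LinearMap.comp_apply, s_single]
    have hrlt := r.isLt
    have hlt : i - 1 + r.val < e := by omega
    have hUv : (U k e i j).v t (Pi.single r (1 : k)) =
        if i - 1 + r.val = t.val then Pi.single r 1 else 0 :=
      prj_single (fun r : Fin (j + 1 - i) => i - 1 + r.val = t.val) r 1
    rw [hUv]
    by_cases hc : i - 1 + r.val = t.val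
    · rw [if_pos hc, s_single]
      have ht : t = idx e (i - 1 + r.val) := by
        apply Fin.ext; rw [idx_val, Nat.mod_eq_of_lt hlt]; omega
      rw [ht, hW1]
    · rw [if_neg hc, map_zero]
      refine (hW2 t r.val ?_).symm
      intro hEq
      apply hc
      have h := congrArg Fin.val hEq
      rw [idx_val, Nat.mod_eq_of_lt hlt] at h
      omega
  · -- compatibility with the arrows
    intro t
    apply pi_ext
    intro r
    simp only [LinearMap.comp_apply, s_single]
    have hrlt := r.isLt
    have hlt : i - 1 + r.val < e := by omega
    by_cases hc : t.val = i - 1 + r.val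
    · have ht : t = idx e (i - 1 + r.val) := by
        apply Fin.ext; rw [idx_val, Nat.mod_eq_of_lt hlt]; omega
      have hRHS : E.a t (w r.val) = w (r.val + 1) := by rw [ht, hwsucc]
      rw [hRHS]
      by_cases hlast : r.val + 1 < j + 1 - i
      · split
        · rw [mk1_single, if_pos (by apply Fin.ext; show t.val + 1 - i = r.val; omega)]
          simp only [LinearMap.id_apply]
          rw [s_single]
          congr 1
          show t.val + 2 - i = r.val + 1
          omega
        · next hcond => exfalso; apply hcond; omega
      · split
        · next hcond => exfalso; omega
        · rw [LinearMap.zero_apply, map_zero,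
            show r.val + 1 = j + 1 - i by omega, hW4]
    · have hRHS : E.a t (w r.val) = 0 := by
        have h := DFunLike.congr_fun (hvav t) (w r.val)
        simp only [Module.End.mul_apply] at h
        have hne : t ≠ idx e (i - 1 + r.val) := by
          intro hEq
          apply hc
          have h2 := congrArg Fin.val hEq
          rw [idx_val, Nat.mod_eq_of_lt hlt] at h2
          omega
        rw [h, hW2 t r.val hne, map_zero, map_zero]
      rw [hRHS]
      split
      · next hcond =>
        rw [mk1_single, if_neg (by
          intro hEq
          apply hc
          have h2 := congrArg Fin.val hEq
          simp only [Fin.val_mk] at h2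
          omega), map_zero]
      · rw [LinearMap.zero_apply, map_zero]
  · -- compatibility with δ
    apply pi_ext
    intro r
    simp only [LinearMap.comp_apply, s_single]
    rw [hW5 r.val r.isLt]
    rw [LinearMap.zero_apply, map_zero]
  · -- section of g
    apply pi_ext
    intro r
    simp only [LinearMap.comp_apply, s_single, LinearMap.id_apply]
    exact hW3 r.val r.isLt r rfl

end GBTA
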